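/- Let X ~ NB(μ, b), and conditional on X = x let X1 ~ BetaBinomial(x, εb', (1-ε)b') for b' > 0, ε ∈ (0,1); set X2 = X − X1. Then Cov(X1, X2) = ε(1-ε)(μ²/b)(1 − (b+1)/(b'+1)). In particular Cov(X1, X2) = 0 if and only if b' = b; the covariance is positive when b' > b and negative when b' < b. -/

import Mathlib

/-- The negative binomial pmf in the mean/overdispersion parameterization `NB(μ, b)`. -/
noncomputable def nbPMF (μ b : ℝ) (k : ℕ) : ℝ :=
  Real.Gamma (k + b) / (Real.Gamma b * (Nat.factorial k)) *
    (μ / (μ + b)) ^ k * (b / (μ + b)) ^ b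

/-- The beta function `B(a, c) = Γ(a) Γ(c) / Γ(a + c)`. -/
noncomputable def betaFn (a c : ℝ) : ℝ :=
  Real.Gamma a * Real.Gamma c / Real.Gamma (a + c)

/-- The beta-binomial pmf with `n` trials and shape parameters `a, c`, evaluated at `k`. -/
noncomputable def betaBinomPMF (n : ℕ) (a c : ℝ) (k : ℕ) : ℝ :=
  (n.choose k) * betaFn ((k : ℝ) + a) (((n - k : ℕ) : ℝ) + c) / betaFn a c


open Finset Filter

/-- ascending Pochhammer evaluated in ℝ -/
noncomputable def pA (k : ℕ) (t : ℝ) : ℝ := (ascPochhammer ℝ k).eval t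

lemma pA_zero (t : ℝ) : pA 0 t = 1 := by simp [pA]

lemma pA_succ (k : ℕ) (t : ℝ) : pA (k + 1) t = pA k t * (t + k) := by
  simp [pA, ascPochhammer_succ_eval]

lemma pA_succ_left (k : ℕ) (t : ℝ) : pA (k + 1) t = t * pA k (t + 1) := by
  simp [pA, ascPochhammer_succ_left, Polynomial.eval_comp]

lemma pA_pos {t : ℝ} (ht : 0 < t) (k : ℕ) : 0 < pA k t := ascPochhammer_pos k t ht

lemma pA_one (k : ℕ) : pA k 1 = (k.factorial : ℝ) := by
  simpa [pA] using ascPochhammer_eval_one ℝ k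

lemma pA_mono {t s : ℝ} (ht : 0 < t) (hts : t ≤ s) (k : ℕ) : pA k t ≤ pA k s := by
  induction k with
  | zero => simp [pA_zero]
  | succ k ih =>
    rw [pA_succ, pA_succ]
    have h1 : (0:ℝ) ≤ pA k t := (pA_pos ht k).le
    have h2 : (0:ℝ) < t + k := by positivity
    exact mul_le_mul ih (by linarith) h2.le ((pA_pos (lt_of_lt_of_le ht hts) k).le)

lemma pA_vander (k : ℕ) (a c : ℝ) :
    pA k (a + c) = ∑ ij ∈ antidiagonal k,
      (k.choose ij.1 : ℝ) * (pA ij.1 a * pA ij.2 c) := by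
  have hsm : ∀ (m : ℕ) (x : ℝ), (descPochhammer ℤ m).smeval x = (descPochhammer ℝ m).eval x := by
    intro m x
    rw [Polynomial.descPochhammer_smeval_eq_ascPochhammer, Polynomial.ascPochhammer_smeval_eq_eval,
      descPochhammer_eval_eq_ascPochhammer]
  have hda : ∀ (m : ℕ) (x : ℝ), (descPochhammer ℝ m).eval (-x) = (-1) ^ m * pA m x := by
    intro m x
    have := ascPochhammer_eval_neg_eq_descPochhammer (R:=ℝ) (-x) m
    rw [neg_neg] at this
    rw [pA, this, ← mul_assoc, ← pow_add, ← two_mul, pow_mul, neg_one_sq, one_pow, one_mul]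
  have key := Ring.descPochhammer_smeval_add (R := ℝ) (r := -a) (s := -c) k (Commute.all _ _)
  rw [hsm] at key
  have hL : (descPochhammer ℝ k).eval (-a + -c) = (-1) ^ k * pA k (a + c) := by
    rw [show (-a + -c) = -(a + c) by ring, hda]
  rw [hL] at key
  have hparity : ∀ ij ∈ antidiagonal k, ((k.choose ij.1 : ℝ) *
      ((descPochhammer ℤ ij.1).smeval (-a) * (descPochhammer ℤ ij.2).smeval (-c)))
      = (-1) ^ k * ((k.choose ij.1 : ℝ) * (pA ij.1 a * pA ij.2 c)) := by
    intro ij hij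
    rw [hsm, hsm, hda, hda]
    rw [Finset.HasAntidiagonal.mem_antidiagonal] at hij
    rw [← hij, pow_add]
    ring
  rw [Finset.sum_congr rfl hparity, ← Finset.mul_sum] at key
  have hne : ((-1 : ℝ)) ^ k ≠ 0 := by
    simp
  exact mul_left_cancel₀ hne key

/-- The coefficient of the negative binomial series. -/
noncomputable def pc (β : ℝ) (x : ℕ) : ℝ := pA x β / (x.factorial : ℝ)

lemma pc_zero (β : ℝ) : pc β 0 = 1 := by simp [pc, pA_zero]

lemma pc_pos {β : ℝ} (hβ : 0 < β) (x : ℕ) : 0 < pc β x :=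
  div_pos (pA_pos hβ x) (by positivity)

lemma pc_succ (β : ℝ) (x : ℕ) : pc β (x + 1) = pc β x * ((β + x) / (x + 1)) := by
  have h1 : ((x : ℝ) + 1) ≠ 0 := by positivity
  have h2 : ((x.factorial : ℝ)) ≠ 0 := by positivity
  rw [pc, pc, pA_succ, Nat.factorial_succ]
  push_cast
  field_simp

lemma pc_shift (β : ℝ) (x : ℕ) : ((x : ℝ) + 1) * pc β (x + 1) = β * pc (β + 1) x := by
  have h1 : ((x : ℝ) + 1) ≠ 0 := by positivity
  have h2 : ((x.factorial : ℝ)) ≠ 0 := by positivity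
  rw [pc, pc, pA_succ_left, Nat.factorial_succ]
  push_cast
  field_simp

lemma pc_mono {β γ : ℝ} (hβ : 0 < β) (hβγ : β ≤ γ) (x : ℕ) : pc β x ≤ pc γ x := by
  unfold pc
  gcongr
  exact pA_mono hβ hβγ x

lemma summable_pc {β p : ℝ} (hβ : 0 < β) (hp : 0 < p) (hp1 : p < 1) :
    Summable (fun x : ℕ => pc β x * p ^ x) := by
  set r : ℝ := (1 + p) / 2 with hr
  have hrp : p < r := by rw [hr]; linarith
  have hr1 : r < 1 := by rw [hr]; linarith
  apply summable_of_ratio_norm_eventually_le hr1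
  have hrp0 : 0 < r - p := by linarith
  filter_upwards [eventually_ge_atTop (⌈p * β / (r - p)⌉₊)] with n hn
  have hn' : p * β / (r - p) ≤ (n : ℝ) := le_trans (Nat.le_ceil _) (by exact_mod_cast hn)
  have hnr : p * β ≤ (n : ℝ) * (r - p) := by
    rw [div_le_iff₀ hrp0] at hn'
    linarith
  have hterm : ∀ m : ℕ, (0:ℝ) ≤ pc β m * p ^ m := fun m => by
    have := pc_pos hβ m
    positivity
  rw [Real.norm_eq_abs, Real.norm_eq_abs, abs_of_nonneg (hterm _), abs_of_nonneg (hterm _)]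
  rw [pc_succ, pow_succ]
  have h1 : pc β n * ((β + n) / (n + 1)) * (p ^ n * p)
      = (pc β n * p ^ n) * (p * (β + n) / (n + 1)) := by ring
  rw [h1]
  have h2 : p * (β + n) / (n + 1) ≤ r := by
    rw [div_le_iff₀ (by positivity)]
    nlinarith [hp.le, hrp0.le]
  calc (pc β n * p ^ n) * (p * (β + n) / (n + 1)) ≤ (pc β n * p ^ n) * r :=
        mul_le_mul_of_nonneg_left h2 (hterm n)
    _ = r * (pc β n * p ^ n) := by ring

noncomputable def Fs (β p : ℝ) : ℝ := ∑' x : ℕ, pc β x * p ^ x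

lemma Fs_ge_one {β p : ℝ} (hβ : 0 < β) (hp : 0 < p) (hp1 : p < 1) : 1 ≤ Fs β p := by
  have := Summable.le_tsum (summable_pc hβ hp hp1) 0 (fun i _ => by
    have := pc_pos hβ i; positivity)
  simpa [pc_zero, Fs] using this

lemma Fs_pos {β p : ℝ} (hβ : 0 < β) (hp : 0 < p) (hp1 : p < 1) : 0 < Fs β p :=
  lt_of_lt_of_le one_pos (Fs_ge_one hβ hp hp1)

lemma Fs_mono {β γ p : ℝ} (hβ : 0 < β) (hβγ : β ≤ γ) (hp : 0 < p) (hp1 : p < 1) :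
    Fs β p ≤ Fs γ p := by
  apply Summable.tsum_le_tsum _ (summable_pc hβ hp hp1) (summable_pc (lt_of_lt_of_le hβ hβγ) hp hp1)
  intro x
  exact mul_le_mul_of_nonneg_right (pc_mono hβ hβγ x) (by positivity)

lemma Fs_one {p : ℝ} (hp : 0 < p) (hp1 : p < 1) : Fs 1 p = (1 - p)⁻¹ := by
  have h : ∀ x : ℕ, pc 1 x * p ^ x = p ^ x := by
    intro x; rw [pc, pA_one, div_self (by positivity), one_mul]
  rw [Fs, tsum_congr h, tsum_geometric_of_lt_one hp.le hp1]

lemma Fs_mul {β γ p : ℝ} (hβ : 0 < β) (hγ : 0 < γ) (hp : 0 < p) (hp1 : p < 1) :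
    Fs (β + γ) p = Fs β p * Fs γ p := by
  have hnrm : ∀ {δ : ℝ}, 0 < δ → ∀ x : ℕ, ‖pc δ x * p ^ x‖ = pc δ x * p ^ x := by
    intro δ hδ x
    rw [Real.norm_eq_abs, abs_of_nonneg]
    have := pc_pos hδ x
    positivity
  have hf : Summable fun x : ℕ => ‖pc β x * p ^ x‖ :=
    (summable_pc hβ hp hp1).congr (fun x => (hnrm hβ x).symm)
  have hg : Summable fun x : ℕ => ‖pc γ x * p ^ x‖ :=
    (summable_pc hγ hp hp1).congr (fun x => (hnrm hγ x).symm)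
  have key := tsum_mul_tsum_eq_tsum_sum_antidiagonal_of_summable_norm hf hg
  rw [Fs, Fs, Fs, key]
  apply tsum_congr
  intro n
  rw [pc, pA_vander, Finset.sum_div, Finset.sum_mul]
  apply Finset.sum_congr rfl
  intro ij hij
  have hij' : ij.1 + ij.2 = n := Finset.HasAntidiagonal.mem_antidiagonal.mp hij
  have hfac : n.choose ij.1 * ij.1.factorial * ij.2.factorial = n.factorial := by
    have h1 : ij.1 ≤ n := hij' ▸ Nat.le_add_right _ _
    have h2 : n - ij.1 = ij.2 := by omega
    have := Nat.choose_mul_factorial_mul_factorial h1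
    rwa [h2] at this
  have hpn : p ^ n = p ^ ij.1 * p ^ ij.2 := by rw [← pow_add, hij']
  rw [pc, pc, hpn, ← hfac]
  have h1 : (ij.1.factorial : ℝ) ≠ 0 := by positivity
  have h2 : (ij.2.factorial : ℝ) ≠ 0 := by positivity
  have h3 : (n.choose ij.1 : ℝ) ≠ 0 := by
    have := Nat.choose_pos (show ij.1 ≤ n from hij' ▸ Nat.le_add_right _ _)
    positivity
  push_cast
  field_simp

lemma Fs_eq {β p : ℝ} (hβ : 0 < β) (hp : 0 < p) (hp1 : p < 1) :
    Fs β p = (1 - p) ^ (-β) := by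
  have h1p : (0:ℝ) < 1 - p := by linarith
  set H : ℝ → ℝ := fun t => Real.log ((1 - p) ^ t * Fs t p) with hH
  have hGpos : ∀ t : ℝ, 0 < t → 0 < (1 - p) ^ t * Fs t p := fun t ht =>
    mul_pos (Real.rpow_pos_of_pos h1p t) (Fs_pos ht hp hp1)
  have hHadd : ∀ s t : ℝ, 0 < s → 0 < t → H (s + t) = H s + H t := by
    intro s t hs ht
    show Real.log _ = _
    rw [Fs_mul hs ht hp hp1, Real.rpow_add h1p,
      show (1-p) ^ s * (1-p) ^ t * (Fs s p * Fs t p)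
        = ((1-p) ^ s * Fs s p) * ((1-p) ^ t * Fs t p) by ring]
    exact Real.log_mul (hGpos s hs).ne' (hGpos t ht).ne'
  have hH1 : H 1 = 0 := by
    show Real.log _ = 0
    rw [Fs_one hp hp1, Real.rpow_one, mul_inv_cancel₀ (by linarith)]
    exact Real.log_one
  set C : ℝ := |Real.log (1 - p)| + Real.log (Fs 1 p) with hC
  have hCbound : ∀ t : ℝ, 0 < t → t ≤ 1 → |H t| ≤ C := by
    intro t ht ht1
    show |Real.log _| ≤ C
    rw [Real.log_mul (Real.rpow_pos_of_pos h1p t).ne' (Fs_pos ht hp hp1).ne',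
      Real.log_rpow h1p]
    have h2 : 0 ≤ Real.log (Fs t p) := Real.log_nonneg (Fs_ge_one ht hp hp1)
    have h3 : Real.log (Fs t p) ≤ Real.log (Fs 1 p) :=
      Real.log_le_log (Fs_pos ht hp hp1) (Fs_mono ht ht1 hp hp1)
    have h4 : |t * Real.log (1 - p)| ≤ |Real.log (1 - p)| := by
      rw [abs_mul, abs_of_pos ht]
      nlinarith [abs_nonneg (Real.log (1 - p))]
    calc |t * Real.log (1 - p) + Real.log (Fs t p)|
        ≤ |t * Real.log (1 - p)| + |Real.log (Fs t p)| := abs_add_le _ _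
      _ ≤ C := by rw [abs_of_nonneg h2, hC]; linarith
  have hHnat : ∀ m : ℕ, H ((m : ℝ) + 1) = 0 := by
    intro m
    induction m with
    | zero => simpa using hH1
    | succ m ih =>
      have : ((m : ℝ) + 1) + 1 = ((m + 1 : ℕ) : ℝ) + 1 := by push_cast; ring
      rw [← this, hHadd _ _ (by positivity) one_pos, ih, hH1, add_zero]
  have hHboundAll : ∀ t : ℝ, 0 < t → |H t| ≤ C := by
    intro t ht
    rcases Nat.eq_zero_or_pos ⌈t⌉₊ with h0 | hpos
    · exfalso
      have := Nat.ceil_pos.mpr ht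
      omega
    set m : ℕ := ⌈t⌉₊ - 1 with hm
    have hceil : (⌈t⌉₊ : ℝ) = (m : ℝ) + 1 := by
      rw [hm]; push_cast [Nat.cast_sub hpos]; ring
    have hts : t - (m : ℝ) ≤ 1 := by
      have := Nat.le_ceil t
      rw [hceil] at this
      linarith
    have hts0 : 0 < t - (m : ℝ) := by
      have h := Nat.ceil_lt_add_one ht.le
      rw [hceil] at h
      linarith
    rcases Nat.eq_zero_or_pos m with hm0 | hmpos
    · have : t ≤ 1 := by rw [hm0] at hts; simpa using hts
      exact hCbound t ht this
    · have hmR : (0:ℝ) < m := by exact_mod_cast hmpos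
      have : H t = H (m : ℝ) + H (t - m) := by
        have h := hHadd (m : ℝ) (t - m) hmR hts0
        rwa [show (m : ℝ) + (t - m) = t by ring] at h
      have hHm : H (m : ℝ) = 0 := by
        have h := hHnat (m - 1)
        have heq : ((m - 1 : ℕ) : ℝ) + 1 = (m : ℝ) := by
          push_cast [Nat.cast_sub hmpos]; ring
        rwa [heq] at h
      rw [this, hHm, zero_add]
      exact hCbound _ hts0 hts
  have hHmul : ∀ n : ℕ, H (((n : ℝ) + 1) * β) = ((n : ℝ) + 1) * H β := by
    intro n
    induction n with
    | zero => simp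
    | succ n ih =>
      have hsplit : (((n + 1 : ℕ) : ℝ) + 1) * β = ((n : ℝ) + 1) * β + β := by
        push_cast; ring
      rw [hsplit, hHadd _ _ (by positivity) hβ, ih]
      push_cast; ring
  have hHzero : H β = 0 := by
    by_contra hne
    have habs : 0 < |H β| := abs_pos.mpr hne
    obtain ⟨n, hn⟩ := exists_nat_gt (C / |H β|)
    have h1 : ((n : ℝ) + 1) * |H β| ≤ C := by
      have := hHboundAll _ (by positivity : (0:ℝ) < ((n : ℝ) + 1) * β)
      rw [hHmul n] at this
      rwa [abs_mul, abs_of_pos (by positivity : (0:ℝ) < (n : ℝ) + 1)] at this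
    have h2 : C / |H β| < (n : ℝ) + 1 := by linarith
    rw [div_lt_iff₀ habs] at h2
    linarith
  have hG1 : (1 - p) ^ β * Fs β p = 1 := by
    have := congrArg Real.exp hHzero
    rwa [Real.exp_log (hGpos β hβ), Real.exp_zero] at this
  rw [Real.rpow_neg h1p.le]
  field_simp at hG1 ⊢
  linarith [hG1]

section NBseries

variable {b p : ℝ} (hb : 0 < b) (hp : 0 < p) (hp1 : p < 1)

lemma shift_one (x : ℕ) :
    pc b (x + 1) * p ^ (x + 1) * ((x : ℝ) + 1) = b * p * (pc (b + 1) x * p ^ x) := by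
  have h := pc_shift b x
  rw [pow_succ]
  linear_combination (p ^ x * p) * h

include hb hp hp1 in
lemma summable_pc_id : Summable (fun x : ℕ => pc b x * p ^ x * x) := by
  apply (summable_nat_add_iff 1).mp
  apply Summable.congr (((summable_pc (by linarith : (0:ℝ) < b + 1) hp hp1).mul_left (b * p)))
  intro n
  rw [show ((n + 1 : ℕ) : ℝ) = (n : ℝ) + 1 by push_cast; ring]
  exact (shift_one n).symm

include hb hp hp1 in
lemma tsum_pc_id : ∑' x : ℕ, pc b x * p ^ x * x = b * p * (1 - p) ^ (-(b + 1)) := by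
  rw [Summable.tsum_eq_zero_add (summable_pc_id hb hp hp1)]
  simp only [Nat.cast_zero, mul_zero, zero_add]
  calc ∑' n : ℕ, pc b (n + 1) * p ^ (n + 1) * ((n + 1 : ℕ) : ℝ)
      = ∑' n : ℕ, b * p * (pc (b + 1) n * p ^ n) := by
        apply tsum_congr; intro n
        rw [show ((n + 1 : ℕ) : ℝ) = (n : ℝ) + 1 by push_cast; ring]
        exact shift_one n
    _ = b * p * Fs (b + 1) p := tsum_mul_left
    _ = b * p * (1 - p) ^ (-(b + 1)) := by
        rw [Fs_eq (by linarith : (0:ℝ) < b + 1) hp hp1]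

lemma shift_two (x : ℕ) :
    pc b (x + 2) * p ^ (x + 2) * (((x : ℝ) + 2) * ((x : ℝ) + 1))
      = b * (b + 1) * p ^ 2 * (pc (b + 2) x * p ^ x) := by
  have h1 := pc_shift b (x + 1)
  have h2 := pc_shift (b + 1) x
  have e1 : ((x + 1 : ℕ) : ℝ) = (x : ℝ) + 1 := by push_cast; ring
  rw [e1] at h1
  have e2 : (b + 1) + 1 = b + 2 := by ring
  rw [e2] at h2
  have hp2 : p ^ (x + 2) = p ^ x * p ^ 2 := by rw [← pow_add]
  rw [hp2]
  linear_combination (p ^ x * p ^ 2) * (((x:ℝ) + 1) * h1 + b * h2)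

include hb hp hp1 in
lemma summable_pc_id2 :
    Summable (fun x : ℕ => pc b x * p ^ x * ((x : ℝ) * ((x : ℝ) - 1))) := by
  apply (summable_nat_add_iff 2).mp
  apply Summable.congr (((summable_pc (by linarith : (0:ℝ) < b + 2) hp hp1).mul_left
    (b * (b + 1) * p ^ 2)))
  intro n
  rw [show ((n + 2 : ℕ) : ℝ) = (n : ℝ) + 2 by push_cast; ring]
  rw [show ((n : ℝ) + 2) * (((n : ℝ) + 2) - 1) = ((n : ℝ) + 2) * ((n : ℝ) + 1) by ring]
  exact (shift_two n).symm

include hb hp hp1 in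
lemma tsum_pc_id2 : ∑' x : ℕ, pc b x * p ^ x * ((x : ℝ) * ((x : ℝ) - 1))
    = b * (b + 1) * p ^ 2 * (1 - p) ^ (-(b + 2)) := by
  have hsum := summable_pc_id2 hb hp hp1
  rw [Summable.tsum_eq_zero_add hsum, Summable.tsum_eq_zero_add ((summable_nat_add_iff 1).mpr hsum)]
  have hts : ∑' n : ℕ, pc b (n + 1 + 1) * p ^ (n + 1 + 1)
        * (((n + 1 + 1 : ℕ) : ℝ) * (((n + 1 + 1 : ℕ) : ℝ) - 1))
      = b * (b + 1) * p ^ 2 * Fs (b + 2) p := by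
    rw [Fs, ← tsum_mul_left]
    apply tsum_congr; intro n
    rw [show ((n + 1 + 1 : ℕ) : ℝ) = (n : ℝ) + 2 by push_cast; ring]
    rw [show ((n : ℝ) + 2) * (((n : ℝ) + 2) - 1) = ((n : ℝ) + 2) * ((n : ℝ) + 1) by ring]
    exact shift_two n
  rw [hts, Fs_eq (by linarith : (0:ℝ) < b + 2) hp hp1]
  norm_num

end NBseries

section NB

variable {μ b : ℝ} (hμ : 0 < μ) (hb : 0 < b)

lemma Gamma_nat_add (hb : 0 < b) (x : ℕ) :
    Real.Gamma ((x : ℝ) + b) = pA x b * Real.Gamma b := by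
  induction x with
  | zero => simp [pA_zero]
  | succ x ih =>
    have hne : (x : ℝ) + b ≠ 0 := by positivity
    rw [show ((x + 1 : ℕ) : ℝ) + b = ((x : ℝ) + b) + 1 by push_cast; ring,
      Real.Gamma_add_one hne, ih, pA_succ]
    ring

include hμ hb in
lemma nbPMF_eq (x : ℕ) :
    nbPMF μ b x = pc b x * (μ / (μ + b)) ^ x * (b / (μ + b)) ^ b := by
  have hΓ : Real.Gamma b ≠ 0 := (Real.Gamma_pos_of_pos hb).ne'
  have hfac : ((x.factorial : ℝ)) ≠ 0 := by positivity
  rw [nbPMF, Gamma_nat_add hb, pc]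
  field_simp

end NB

section BB

variable {a c : ℝ} (ha : 0 < a) (hc : 0 < c)

include ha hc in
lemma betaBinomPMF_eq {n k : ℕ} (h : k ≤ n) :
    betaBinomPMF n a c k = (n.choose k : ℝ) * (pA k a * pA (n - k) c) / pA n (a + c) := by
  have hΓa : Real.Gamma a ≠ 0 := (Real.Gamma_pos_of_pos ha).ne'
  have hΓc : Real.Gamma c ≠ 0 := (Real.Gamma_pos_of_pos hc).ne'
  have hΓac : Real.Gamma (a + c) ≠ 0 := (Real.Gamma_pos_of_pos (by linarith)).ne'
  have hpA : pA n (a + c) ≠ 0 := (pA_pos (by linarith) n).ne'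
  have hsum : (k : ℝ) + a + (((n - k : ℕ) : ℝ) + c) = (n : ℝ) + (a + c) := by
    rw [Nat.cast_sub h]; ring
  rw [betaBinomPMF, betaFn, betaFn, hsum, Gamma_nat_add (show (0:ℝ) < a + c by linarith),
    Gamma_nat_add ha, Gamma_nat_add hc]
  field_simp

lemma betaBinomPMF_eq_zero {n k : ℕ} (h : n < k) : betaBinomPMF n a c k = 0 := by
  rw [betaBinomPMF, Nat.choose_eq_zero_of_lt h]
  simp

/-- Vandermonde over range -/
lemma V0 (n : ℕ) (a c : ℝ) :
    ∑ k ∈ range (n + 1), (n.choose k : ℝ) * (pA k a * pA (n - k) c) = pA n (a + c) := by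
  rw [pA_vander, Finset.Nat.sum_antidiagonal_eq_sum_range_succ_mk]

lemma V1 (n : ℕ) (a c : ℝ) :
    ∑ k ∈ range (n + 2), ((k : ℝ)) * ((n + 1).choose k : ℝ) * (pA k a * pA (n + 1 - k) c)
      = ((n : ℝ) + 1) * a * pA n ((a + 1) + c) := by
  rw [Finset.sum_range_succ']
  simp only [Nat.cast_zero, zero_mul]
  rw [add_zero]
  have hterm : ∀ k : ℕ, ((k + 1 : ℕ) : ℝ) * ((n + 1).choose (k + 1) : ℝ)
        * (pA (k + 1) a * pA (n + 1 - (k + 1)) c)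
      = ((n : ℝ) + 1) * a * ((n.choose k : ℝ) * (pA k (a + 1) * pA (n - k) c)) := by
    intro k
    have hch : ((k + 1 : ℕ) : ℝ) * ((n + 1).choose (k + 1) : ℝ) = ((n : ℝ) + 1) * (n.choose k : ℝ) := by
      have := Nat.add_one_mul_choose_eq n k
      have h2 : ((n.succ * n.choose k : ℕ) : ℝ) = (((n + 1).choose (k + 1) * (k + 1) : ℕ) : ℝ) := by
        exact_mod_cast congrArg (Nat.cast : ℕ → ℝ) this
      push_cast at h2 ⊢
      linarith
    have hsub : n + 1 - (k + 1) = n - k := by omega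
    rw [hsub, pA_succ_left]
    calc ((k + 1 : ℕ) : ℝ) * ((n + 1).choose (k + 1) : ℝ) * (a * pA k (a + 1) * pA (n - k) c)
        = (((k + 1 : ℕ) : ℝ) * ((n + 1).choose (k + 1) : ℝ)) * (a * pA k (a + 1) * pA (n - k) c) := by ring
      _ = (((n : ℝ) + 1) * (n.choose k : ℝ)) * (a * pA k (a + 1) * pA (n - k) c) := by rw [hch]
      _ = ((n : ℝ) + 1) * a * ((n.choose k : ℝ) * (pA k (a + 1) * pA (n - k) c)) := by ring
  calc ∑ k ∈ range (n + 1), ((k + 1 : ℕ) : ℝ) * ((n + 1).choose (k + 1) : ℝ)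
        * (pA (k + 1) a * pA (n + 1 - (k + 1)) c)
      = ∑ k ∈ range (n + 1), ((n : ℝ) + 1) * a * ((n.choose k : ℝ) * (pA k (a + 1) * pA (n - k) c)) :=
        Finset.sum_congr rfl (fun k _ => hterm k)
    _ = ((n : ℝ) + 1) * a * ∑ k ∈ range (n + 1), (n.choose k : ℝ) * (pA k (a + 1) * pA (n - k) c) := by
        rw [Finset.mul_sum]
    _ = ((n : ℝ) + 1) * a * pA n ((a + 1) + c) := by rw [V0]

lemma V2 (n : ℕ) (a c : ℝ) :
    ∑ k ∈ range (n + 3), ((k : ℝ)) * ((k : ℝ) - 1) * ((n + 2).choose k : ℝ) * (pA k a * pA (n + 2 - k) c)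
      = ((n : ℝ) + 2) * ((n : ℝ) + 1) * (a * (a + 1)) * pA n ((a + 2) + c) := by
  rw [Finset.sum_range_succ']
  simp only [Nat.cast_zero, zero_mul]
  rw [add_zero]
  have hterm : ∀ k : ℕ, ((k + 1 : ℕ) : ℝ) * (((k + 1 : ℕ) : ℝ) - 1) * ((n + 2).choose (k + 1) : ℝ)
        * (pA (k + 1) a * pA (n + 2 - (k + 1)) c)
      = ((n : ℝ) + 2) * a * ((k : ℝ) * ((n + 1).choose k : ℝ) * (pA k (a + 1) * pA (n + 1 - k) c)) := by
    intro k
    have hch : ((k + 1 : ℕ) : ℝ) * ((n + 2).choose (k + 1) : ℝ) = ((n : ℝ) + 2) * ((n + 1).choose k : ℝ) := by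
      have := Nat.add_one_mul_choose_eq (n + 1) k
      have h2 : (((n + 1).succ * (n + 1).choose k : ℕ) : ℝ)
          = (((n + 2).choose (k + 1) * (k + 1) : ℕ) : ℝ) := by
        exact_mod_cast congrArg (Nat.cast : ℕ → ℝ) this
      push_cast at h2 ⊢
      linarith
    have hsub : n + 2 - (k + 1) = n + 1 - k := by omega
    rw [hsub, pA_succ_left]
    have hc1 : ((k + 1 : ℕ) : ℝ) - 1 = (k : ℝ) := by push_cast; ring
    rw [hc1]
    calc ((k + 1 : ℕ) : ℝ) * (k : ℝ) * ((n + 2).choose (k + 1) : ℝ) * (a * pA k (a + 1) * pA (n + 1 - k) c)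
        = (((k + 1 : ℕ) : ℝ) * ((n + 2).choose (k + 1) : ℝ)) * ((k : ℝ) * (a * pA k (a + 1) * pA (n + 1 - k) c)) := by ring
      _ = (((n : ℝ) + 2) * ((n + 1).choose k : ℝ)) * ((k : ℝ) * (a * pA k (a + 1) * pA (n + 1 - k) c)) := by rw [hch]
      _ = ((n : ℝ) + 2) * a * ((k : ℝ) * ((n + 1).choose k : ℝ) * (pA k (a + 1) * pA (n + 1 - k) c)) := by ring
  calc ∑ k ∈ range (n + 2), ((k + 1 : ℕ) : ℝ) * (((k + 1 : ℕ) : ℝ) - 1) * ((n + 2).choose (k + 1) : ℝ)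
        * (pA (k + 1) a * pA (n + 2 - (k + 1)) c)
      = ∑ k ∈ range (n + 2), ((n : ℝ) + 2) * a
          * ((k : ℝ) * ((n + 1).choose k : ℝ) * (pA k (a + 1) * pA (n + 1 - k) c)) :=
        Finset.sum_congr rfl (fun k _ => hterm k)
    _ = ((n : ℝ) + 2) * a * ∑ k ∈ range (n + 2), (k : ℝ) * ((n + 1).choose k : ℝ) * (pA k (a + 1) * pA (n + 1 - k) c) := by
        rw [Finset.mul_sum]
    _ = ((n : ℝ) + 2) * ((n : ℝ) + 1) * (a * (a + 1)) * pA n ((a + 2) + c) := by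
        have := V1 n (a + 1) c
        rw [show ∑ k ∈ range (n + 2), (k : ℝ) * (((n + 1).choose k : ℝ)) * (pA k (a + 1) * pA (n + 1 - k) c)
          = ((n : ℝ) + 1) * (a + 1) * pA n ((a + 1 + 1) + c) from this]
        rw [show a + 1 + 1 = a + 2 by ring]
        ring

include ha hc in
lemma bb_sum0 (n : ℕ) : ∑ k ∈ range (n + 1), betaBinomPMF n a c k = 1 := by
  have hpA : pA n (a + c) ≠ 0 := (pA_pos (by linarith) n).ne'
  have h1 : ∀ k ∈ range (n + 1), betaBinomPMF n a c k
      = (n.choose k : ℝ) * (pA k a * pA (n - k) c) / pA n (a + c) := fun k hk =>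
    betaBinomPMF_eq ha hc (Nat.lt_succ_iff.mp (Finset.mem_range.mp hk))
  rw [Finset.sum_congr rfl h1, ← Finset.sum_div, V0, div_self hpA]

include ha hc in
lemma bb_sum1 (n : ℕ) : ∑ k ∈ range (n + 1), (k : ℝ) * betaBinomPMF n a c k
    = (n : ℝ) * a / (a + c) := by
  have hac : (0:ℝ) < a + c := by linarith
  have h1 : ∀ k ∈ range (n + 1), (k : ℝ) * betaBinomPMF n a c k
      = (k : ℝ) * (n.choose k : ℝ) * (pA k a * pA (n - k) c) / pA n (a + c) := fun k hk => by
    rw [betaBinomPMF_eq ha hc (Nat.lt_succ_iff.mp (Finset.mem_range.mp hk))]; ring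
  rw [Finset.sum_congr rfl h1, ← Finset.sum_div]
  cases n with
  | zero => simp
  | succ m =>
    rw [V1 m a c]
    rw [show pA (m + 1) (a + c) = (a + c) * pA m ((a + c) + 1) from pA_succ_left m (a + c)]
    rw [show (a + 1) + c = (a + c) + 1 by ring]
    have h2 : pA m ((a + c) + 1) ≠ 0 := (pA_pos (by linarith) m).ne'
    field_simp
    push_cast
    ring

include ha hc in
lemma bb_sum2 (n : ℕ) : ∑ k ∈ range (n + 1), (k : ℝ) * ((k : ℝ) - 1) * betaBinomPMF n a c k
    = (n : ℝ) * ((n : ℝ) - 1) * (a * (a + 1)) / ((a + c) * ((a + c) + 1)) := by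
  have hac : (0:ℝ) < a + c := by linarith
  have h1 : ∀ k ∈ range (n + 1), (k : ℝ) * ((k : ℝ) - 1) * betaBinomPMF n a c k
      = (k : ℝ) * ((k : ℝ) - 1) * (n.choose k : ℝ) * (pA k a * pA (n - k) c) / pA n (a + c) := fun k hk => by
    rw [betaBinomPMF_eq ha hc (Nat.lt_succ_iff.mp (Finset.mem_range.mp hk))]; ring
  rw [Finset.sum_congr rfl h1, ← Finset.sum_div]
  match n with
  | 0 => simp
  | 1 =>
    rw [show (1:ℕ) + 1 = 2 from rfl]
    rw [Finset.sum_range_succ, Finset.sum_range_succ, Finset.sum_range_zero]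
    norm_num
  | (m + 2) =>
    rw [V2 m a c]
    rw [show pA (m + 2) (a + c) = (a + c) * pA (m + 1) ((a + c) + 1) from pA_succ_left _ _]
    rw [show pA (m + 1) ((a + c) + 1) = ((a + c) + 1) * pA m ((a + c) + 1 + 1) from pA_succ_left _ _]
    rw [show (a + 2) + c = (a + c) + 1 + 1 by ring]
    have h2 : pA m ((a + c) + 1 + 1) ≠ 0 := (pA_pos (by linarith) m).ne'
    field_simp
    push_cast
    ring

end BB

/-- Covariance between the folds when thinning with a possibly misspecified overdispersion
parameter `b'`: if `X ~ NB(μ, b)`, `X1 | X = x ~ BetaBinomial(x, εb', (1-ε)b')`, and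
`X2 = X − X1`, then `Cov(X1, X2) = ε(1-ε)(μ²/b)(1 − (b+1)/(b'+1))`; in particular the
covariance is zero iff `b' = b`, positive when `b' > b`, and negative when `b' < b`. -/
theorem nb_thinning_covariance (μ b b' ε : ℝ) (hμ : 0 < μ) (hb : 0 < b) (hb' : 0 < b')
    (hε : ε ∈ Set.Ioo (0 : ℝ) 1) :
    let j : ℕ → ℕ → ℝ := fun x k => nbPMF μ b x * betaBinomPMF x (ε * b') ((1 - ε) * b') k
    let E : (ℕ → ℕ → ℝ) → ℝ := fun g => ∑' q : ℕ × ℕ, j q.1 q.2 * g q.1 q.2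
    let cov : ℝ :=
      E (fun x k => (k : ℝ) * ((x : ℝ) - (k : ℝ))) -
        E (fun _ k => (k : ℝ)) * E (fun x k => (x : ℝ) - (k : ℝ))
    cov = ε * (1 - ε) * (μ ^ 2 / b) * (1 - (b + 1) / (b' + 1)) ∧
      (cov = 0 ↔ b' = b) ∧ (b < b' → 0 < cov) ∧ (b' < b → cov < 0) := by
  obtain ⟨hε0, hε1⟩ := hε
  intro j E cov
  set a : ℝ := ε * b' with ha_def
  set c : ℝ := (1 - ε) * b' with hc_def
  have ha : 0 < a := by rw [ha_def]; positivity
  have hc : 0 < c := by rw [hc_def]; have : 0 < 1 - ε := by linarith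
                        positivity
  have hac : a + c = b' := by rw [ha_def, hc_def]; ring
  have hb'1 : (0:ℝ) < b' + 1 := by linarith
  set p : ℝ := μ / (μ + b) with hp_def
  have hμb : (0:ℝ) < μ + b := by linarith
  have hp : 0 < p := by rw [hp_def]; positivity
  have hp1 : p < 1 := by rw [hp_def, div_lt_one hμb]; linarith
  have h1p : 1 - p = b / (μ + b) := by rw [hp_def]; field_simp; ring
  have hQ : (0:ℝ) < (b / (μ + b)) ^ b := Real.rpow_pos_of_pos (by positivity) b
  set Q : ℝ := (b / (μ + b)) ^ b with hQ_def
  set K : ℝ := ε * (1 - ε) * b' / (b' + 1) with hK_def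
  -- basic facts about j
  have hjeq : ∀ x k : ℕ, j x k = nbPMF μ b x * betaBinomPMF x a c k := fun x k => rfl
  have hnb_pos : ∀ x : ℕ, 0 < nbPMF μ b x := by
    intro x
    rw [nbPMF_eq hμ hb]
    have := pc_pos hb x
    positivity
  have hbb_nonneg : ∀ x k : ℕ, 0 ≤ betaBinomPMF x a c k := by
    intro x k
    rcases le_or_gt k x with h | h
    · rw [betaBinomPMF_eq ha hc h]
      have h1 := pA_pos ha k
      have h2 := pA_pos hc (x - k)
      have h3 := pA_pos (show (0:ℝ) < a + c by linarith) x
      positivity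
    · rw [betaBinomPMF_eq_zero h]
  have hj_nonneg : ∀ x k : ℕ, 0 ≤ j x k := fun x k =>
    mul_nonneg (hnb_pos x).le (hbb_nonneg x k)
  have hj_zero : ∀ x k : ℕ, x < k → j x k = 0 := fun x k h => by
    rw [hjeq, betaBinomPMF_eq_zero h, mul_zero]
  have h1p0 : (0:ℝ) < 1 - p := by linarith
  have hout : ∀ x k : ℕ, k ∉ range (x + 1) → j x k = 0 := by
    intro x k hk
    rw [Finset.mem_range] at hk
    exact hj_zero x k (by omega)
  have hsummable_inner : ∀ (g : ℕ → ℕ → ℝ) (x : ℕ), Summable (fun k => j x k * g x k) :=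
    fun g x => summable_of_ne_finset_zero (s := range (x + 1))
      (fun k hk => by rw [hout x k hk, zero_mul])
  -- inner sums
  have inner2 : ∀ x : ℕ, ∑' k : ℕ, j x k * (k : ℝ) = nbPMF μ b x * (ε * x) := by
    intro x
    rw [tsum_eq_sum (s := range (x + 1)) (fun k hk => by rw [hout x k hk, zero_mul])]
    have hterm : ∀ k ∈ range (x + 1), j x k * (k : ℝ)
        = nbPMF μ b x * ((k : ℝ) * betaBinomPMF x a c k) := fun k _ => by rw [hjeq]; ring
    rw [Finset.sum_congr rfl hterm, ← Finset.mul_sum, bb_sum1 ha hc x, hac]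
    congr 1
    rw [ha_def]
    field_simp
  have inner3 : ∀ x : ℕ, ∑' k : ℕ, j x k * ((x : ℝ) - (k : ℝ))
      = nbPMF μ b x * ((1 - ε) * x) := by
    intro x
    rw [tsum_eq_sum (s := range (x + 1)) (fun k hk => by rw [hout x k hk, zero_mul])]
    have hterm : ∀ k ∈ range (x + 1), j x k * ((x : ℝ) - (k : ℝ))
        = nbPMF μ b x * ((x : ℝ) * betaBinomPMF x a c k - (k : ℝ) * betaBinomPMF x a c k) :=
      fun k _ => by rw [hjeq]; ring
    rw [Finset.sum_congr rfl hterm, ← Finset.mul_sum, Finset.sum_sub_distrib, ← Finset.mul_sum,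
      bb_sum0 ha hc x, bb_sum1 ha hc x, hac, mul_one]
    congr 1
    rw [ha_def]
    field_simp
  have inner1 : ∀ x : ℕ, ∑' k : ℕ, j x k * ((k : ℝ) * ((x : ℝ) - (k : ℝ)))
      = nbPMF μ b x * (K * ((x : ℝ) * ((x : ℝ) - 1))) := by
    intro x
    rw [tsum_eq_sum (s := range (x + 1)) (fun k hk => by rw [hout x k hk, zero_mul])]
    have hterm : ∀ k ∈ range (x + 1), j x k * ((k : ℝ) * ((x : ℝ) - (k : ℝ)))
        = nbPMF μ b x * ((x : ℝ) * ((k : ℝ) * betaBinomPMF x a c k)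
            - ((k : ℝ) * ((k : ℝ) - 1) * betaBinomPMF x a c k
                + (k : ℝ) * betaBinomPMF x a c k)) :=
      fun k _ => by rw [hjeq]; ring
    rw [Finset.sum_congr rfl hterm, ← Finset.mul_sum, Finset.sum_sub_distrib,
      Finset.sum_add_distrib, ← Finset.mul_sum, bb_sum1 ha hc x,
      bb_sum2 ha hc x, hac]
    congr 1
    rw [hK_def, ha_def]
    field_simp
    ring
  -- rpow arithmetic
  have hrpow : ∀ s : ℝ, Q * (1 - p) ^ (-(b + s)) = (1 - p) ^ (-s) := by
    intro s
    rw [hQ_def, ← h1p, ← Real.rpow_add h1p0, show b + -(b + s) = -s by ring]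
  have hrpow1 : Q * (1 - p) ^ (-(b + 1)) = (1 - p)⁻¹ := by
    rw [hrpow 1, Real.rpow_neg_one]
  have hrpow2 : Q * (1 - p) ^ (-(b + 2)) = ((1 - p) ^ (2 : ℕ))⁻¹ := by
    rw [hrpow 2, show (-2 : ℝ) = -((2 : ℕ) : ℝ) by norm_num, Real.rpow_neg h1p0.le,
      Real.rpow_natCast]
  -- outer summability and values
  have houter2 : ∀ x : ℕ, nbPMF μ b x * (ε * x) = (ε * Q) * (pc b x * p ^ x * x) := by
    intro x
    rw [nbPMF_eq hμ hb, ← hp_def, ← hQ_def]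
    ring
  have houter3 : ∀ x : ℕ, nbPMF μ b x * ((1 - ε) * x) = ((1 - ε) * Q) * (pc b x * p ^ x * x) := by
    intro x
    rw [nbPMF_eq hμ hb, ← hp_def, ← hQ_def]
    ring
  have houter1 : ∀ x : ℕ, nbPMF μ b x * (K * ((x : ℝ) * ((x : ℝ) - 1)))
      = (K * Q) * (pc b x * p ^ x * ((x : ℝ) * ((x : ℝ) - 1))) := by
    intro x
    rw [nbPMF_eq hμ hb, ← hp_def, ← hQ_def]
    ring
  -- product summabilities
  have hprod2 : Summable (fun q : ℕ × ℕ => j q.1 q.2 * (q.2 : ℝ)) := by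
    apply (summable_prod_of_nonneg (fun q => mul_nonneg (hj_nonneg q.1 q.2) (Nat.cast_nonneg _))).mpr
    refine ⟨fun x => hsummable_inner (fun _ k => (k : ℝ)) x, ?_⟩
    apply Summable.congr (((summable_pc_id hb hp hp1).mul_left (ε * Q)))
    intro x
    rw [← houter2 x, ← inner2 x]
  have hprod3 : Summable (fun q : ℕ × ℕ => j q.1 q.2 * ((q.1 : ℝ) - (q.2 : ℝ))) := by
    have hnn : ∀ q : ℕ × ℕ, 0 ≤ j q.1 q.2 * ((q.1 : ℝ) - (q.2 : ℝ)) := by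
      intro q
      rcases le_or_gt q.2 q.1 with h | h
      · exact mul_nonneg (hj_nonneg _ _) (sub_nonneg.mpr (by exact_mod_cast h))
      · rw [hj_zero _ _ h, zero_mul]
    apply (summable_prod_of_nonneg hnn).mpr
    refine ⟨fun x => hsummable_inner (fun x k => (x : ℝ) - (k : ℝ)) x, ?_⟩
    apply Summable.congr (((summable_pc_id hb hp hp1).mul_left ((1 - ε) * Q)))
    intro x
    rw [← houter3 x, ← inner3 x]
  have hprod1 : Summable (fun q : ℕ × ℕ => j q.1 q.2 * ((q.2 : ℝ) * ((q.1 : ℝ) - (q.2 : ℝ)))) := by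
    have hnn : ∀ q : ℕ × ℕ, 0 ≤ j q.1 q.2 * ((q.2 : ℝ) * ((q.1 : ℝ) - (q.2 : ℝ))) := by
      intro q
      rcases le_or_gt q.2 q.1 with h | h
      · exact mul_nonneg (hj_nonneg _ _)
          (mul_nonneg (Nat.cast_nonneg _) (sub_nonneg.mpr (by exact_mod_cast h)))
      · rw [hj_zero _ _ h, zero_mul]
    apply (summable_prod_of_nonneg hnn).mpr
    refine ⟨fun x => hsummable_inner (fun x k => (k : ℝ) * ((x : ℝ) - (k : ℝ))) x, ?_⟩
    apply Summable.congr (((summable_pc_id2 hb hp hp1).mul_left (K * Q)))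
    intro x
    rw [← houter1 x, ← inner1 x]
  -- expectations
  have hpmu : p * (μ + b) = μ := by rw [hp_def]; field_simp
  have hval1 : b * p * (1 - p)⁻¹ = μ := by
    rw [h1p, inv_div]
    field_simp
    linear_combination hpmu
  have hp2 : p ^ 2 * (μ + b) ^ 2 = μ ^ 2 := by
    linear_combination (p * (μ + b) + μ) * hpmu
  have hbp : b * p = μ * (1 - p) := by linear_combination hpmu
  have hval2 : b * (b + 1) * p ^ 2 * ((1 - p) ^ (2 : ℕ))⁻¹ = (b + 1) * μ ^ 2 / b := by
    have hne : (1 - p) ≠ 0 := h1p0.ne'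
    field_simp
    linear_combination (b * p + μ * (1 - p)) * hbp
  have hE2 : E (fun _ k => (k : ℝ)) = ε * μ := by
    calc E (fun _ k => (k : ℝ)) = ∑' (x : ℕ) (k : ℕ), j x k * (k : ℝ) :=
          Summable.tsum_prod' hprod2 (fun x => hsummable_inner (fun _ k => (k : ℝ)) x)
      _ = ∑' x : ℕ, (ε * Q) * (pc b x * p ^ x * x) := by
          apply tsum_congr
          intro x
          rw [inner2 x, houter2 x]
      _ = (ε * Q) * (b * p * (1 - p) ^ (-(b + 1))) := by rw [tsum_mul_left, tsum_pc_id hb hp hp1]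
      _ = ε * (b * p) * (Q * (1 - p) ^ (-(b + 1))) := by ring
      _ = ε * μ := by
          rw [hrpow1]
          linear_combination ε * hval1
  have hE3 : E (fun x k => (x : ℝ) - (k : ℝ)) = (1 - ε) * μ := by
    calc E (fun x k => (x : ℝ) - (k : ℝ)) = ∑' (x : ℕ) (k : ℕ), j x k * ((x : ℝ) - (k : ℝ)) :=
          Summable.tsum_prod' hprod3 (fun x => hsummable_inner (fun x k => (x : ℝ) - (k : ℝ)) x)
      _ = ∑' x : ℕ, ((1 - ε) * Q) * (pc b x * p ^ x * x) := by
          apply tsum_congr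
          intro x
          rw [inner3 x, houter3 x]
      _ = ((1 - ε) * Q) * (b * p * (1 - p) ^ (-(b + 1))) := by
          rw [tsum_mul_left, tsum_pc_id hb hp hp1]
      _ = (1 - ε) * (b * p) * (Q * (1 - p) ^ (-(b + 1))) := by ring
      _ = (1 - ε) * μ := by
          rw [hrpow1]
          linear_combination (1 - ε) * hval1
  have hE1 : E (fun x k => (k : ℝ) * ((x : ℝ) - (k : ℝ))) = K * ((b + 1) * μ ^ 2 / b) := by
    calc E (fun x k => (k : ℝ) * ((x : ℝ) - (k : ℝ)))
        = ∑' (x : ℕ) (k : ℕ), j x k * ((k : ℝ) * ((x : ℝ) - (k : ℝ))) :=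
          Summable.tsum_prod' hprod1 (fun x => hsummable_inner (fun x k => (k : ℝ) * ((x : ℝ) - (k : ℝ))) x)
      _ = ∑' x : ℕ, (K * Q) * (pc b x * p ^ x * ((x : ℝ) * ((x : ℝ) - 1))) := by
          apply tsum_congr
          intro x
          rw [inner1 x, houter1 x]
      _ = (K * Q) * (b * (b + 1) * p ^ 2 * (1 - p) ^ (-(b + 2))) := by
          rw [tsum_mul_left, tsum_pc_id2 hb hp hp1]
      _ = K * (b * (b + 1) * p ^ 2) * (Q * (1 - p) ^ (-(b + 2))) := by ring
      _ = K * ((b + 1) * μ ^ 2 / b) := by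
          rw [hrpow2]
          linear_combination K * hval2
  -- the covariance
  have hcovdef : cov = E (fun x k => (k : ℝ) * ((x : ℝ) - (k : ℝ))) -
      E (fun _ k => (k : ℝ)) * E (fun x k => (x : ℝ) - (k : ℝ)) := rfl
  have hmain : cov = ε * (1 - ε) * (μ ^ 2 / b) * (1 - (b + 1) / (b' + 1)) := by
    rw [hcovdef, hE1, hE2, hE3, hK_def]
    field_simp
    ring
  have hfac : cov = (ε * (1 - ε) * μ ^ 2 / b) * ((b' - b) / (b' + 1)) := by
    rw [hmain]
    field_simp; ring
  have hc1 : (0:ℝ) < ε * (1 - ε) * μ ^ 2 / b := by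
    have h1 : (0:ℝ) < 1 - ε := by linarith
    positivity
  refine ⟨hmain, ?_, ?_, ?_⟩
  · constructor
    · intro h
      rw [hfac, mul_eq_zero] at h
      rcases h with h | h
      · exact absurd h hc1.ne'
      · rw [div_eq_zero_iff] at h
        rcases h with h | h
        · linarith
        · linarith
    · intro h
      rw [hfac, h]
      simp
  · intro h
    rw [hfac]
    exact mul_pos hc1 (div_pos (by linarith) hb'1)
  · intro h
    rw [hfac]
    apply mul_neg_of_pos_of_neg hc1
    exact div_neg_of_neg_of_pos (by linarith) hb'1
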